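/- For 0 < α < 1 and 0 ≤ ρ ≤ 1, let η(z) = −(e^{−iρπ} z)^α on the upper half-plane (principal branch of the power on ℂ \ (−∞,0]). Then η maps the upper half-plane into ℂ \ [0,∞), satisfies arg z ≤ arg η(z) ≤ arg z + π for all z in the upper half-plane, and η(z) → 0 nontangentially as z → 0. -/

import Mathlib

open Complex Filter Set
open scoped Topology

/-- The argument of a complex number normalized to lie in `[0, 2π)`. -/
noncomputable def posArg (z : ℂ) : ℝ :=
  if Complex.arg z < 0 then Complex.arg z + 2 * Real.pi else Complex.arg z

/-- The Stolz angle `Γ_{0,θ} = {z ≠ 0 : θ < arg z < π − θ}` at the origin. -/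
def stolzAngle (θ : ℝ) : Set ℂ :=
  {z : ℂ | z ≠ 0 ∧ θ < Complex.arg z ∧ Complex.arg z < Real.pi - θ}

lemma arg_rexp (r θ : ℝ) (hr : 0 < r) (hθ : θ ∈ Set.Ioc (-Real.pi) Real.pi) :
    Complex.arg ((r : ℂ) * Complex.exp ((θ : ℂ) * Complex.I)) = θ := by
  rw [Complex.exp_mul_I]
  exact Complex.arg_mul_cos_add_sin_mul_I hr hθ

lemma arg_pos_of_im_pos {z : ℂ} (hz : 0 < z.im) : 0 < Complex.arg z := by
  rcases lt_or_eq_of_le (Complex.arg_nonneg_iff.2 hz.le) with h | h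
  · exact h
  · exfalso
    have := (Complex.arg_eq_zero_iff.1 h.symm).2
    linarith

lemma arg_lt_pi_of_im_pos {z : ℂ} (hz : 0 < z.im) : Complex.arg z < Real.pi := by
  rcases lt_or_eq_of_le (Complex.arg_le_pi z) with h | h
  · exact h
  · exfalso
    have := (Complex.arg_eq_pi_iff.1 h).2
    linarith

lemma rot_eq (ρ : ℝ) (z : ℂ) :
    Complex.exp (-(ρ : ℂ) * Real.pi * Complex.I) * z
      = (‖z‖ : ℂ) * Complex.exp (((Complex.arg z - ρ * Real.pi : ℝ) : ℂ) * Complex.I) := by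
  conv_lhs => rw [← Complex.norm_mul_exp_arg_mul_I z]
  rw [← mul_assoc, mul_comm (Complex.exp _) ((‖z‖ : ℂ)), mul_assoc,
    ← Complex.exp_add]
  congr 1
  push_cast
  ring_nf

lemma eta_polar (α ρ : ℝ) (z : ℂ) (hz : z ≠ 0)
    (hθ : Complex.arg z - ρ * Real.pi ∈ Set.Ioc (-Real.pi) Real.pi) :
    (Complex.exp (-(ρ : ℂ) * Real.pi * Complex.I) * z) ^ (α : ℂ)
      = ((‖z‖ ^ α : ℝ) : ℂ)
        * Complex.exp (((α * (Complex.arg z - ρ * Real.pi) : ℝ) : ℂ) * Complex.I) := by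
  have habs : (0:ℝ) < ‖z‖ := norm_pos_iff.mpr hz
  have hne : Complex.exp (-(ρ : ℂ) * Real.pi * Complex.I) * z ≠ 0 :=
    mul_ne_zero (Complex.exp_ne_zero _) hz
  rw [Complex.cpow_def_of_ne_zero hne, rot_eq ρ z]
  have harg : Complex.arg ((‖z‖ : ℂ)
      * Complex.exp (((Complex.arg z - ρ * Real.pi : ℝ) : ℂ) * Complex.I))
      = Complex.arg z - ρ * Real.pi := arg_rexp _ _ habs hθ
  have habs2 : ‖((‖z‖ : ℂ)
      * Complex.exp (((Complex.arg z - ρ * Real.pi : ℝ) : ℂ) * Complex.I))‖ = ‖z‖ := by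
    rw [norm_mul, Complex.norm_exp]
    simp [habs.le]
  rw [Complex.log, harg, habs2]
  rw [add_mul, Complex.exp_add]
  congr 1
  · rw [← Complex.ofReal_mul, ← Complex.ofReal_exp, Real.rpow_def_of_pos habs]
  · congr 1
    push_cast
    ring

lemma arg_neg_rexp (r ψ : ℝ) (hr : 0 < r) (h1 : -Real.pi < ψ) (h2 : ψ < Real.pi) :
    Complex.arg (-((r : ℂ) * Complex.exp ((ψ : ℂ) * Complex.I)))
      = if ψ ≤ 0 then ψ + Real.pi else ψ - Real.pi := by
  have hpi := Real.pi_pos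
  split_ifs with h
  · have : -((r : ℂ) * Complex.exp ((ψ : ℂ) * Complex.I))
        = (r : ℂ) * Complex.exp (((ψ + Real.pi : ℝ) : ℂ) * Complex.I) := by
      push_cast
      rw [add_mul, Complex.exp_add, Complex.exp_pi_mul_I]
      ring
    rw [this]
    exact arg_rexp _ _ hr ⟨by linarith, by linarith⟩
  · have : -((r : ℂ) * Complex.exp ((ψ : ℂ) * Complex.I))
        = (r : ℂ) * Complex.exp (((ψ - Real.pi : ℝ) : ℂ) * Complex.I) := by
      push_cast
      rw [sub_mul, Complex.exp_sub, Complex.exp_pi_mul_I]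
      field_simp
    rw [this]
    exact arg_rexp _ _ hr ⟨by linarith, by linarith⟩

lemma posArg_neg_rexp (r ψ : ℝ) (hr : 0 < r) (h1 : -Real.pi < ψ) (h2 : ψ < Real.pi) :
    posArg (-((r : ℂ) * Complex.exp ((ψ : ℂ) * Complex.I))) = ψ + Real.pi := by
  have hpi := Real.pi_pos
  rw [posArg, arg_neg_rexp r ψ hr h1 h2]
  split_ifs with h h' h'
  · linarith
  · rfl
  · linarith
  · linarith

/-- For `0 < α < 1` and `0 ≤ ρ ≤ 1`, the map `η(z) = −(e^{−iρπ} z)^α` (principal branch) maps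
the upper half-plane into `ℂ \ [0, ∞)`, satisfies `arg z ≤ arg η(z) ≤ arg z + π` there
(arguments normalized in `[0, 2π)`), and `η(z) → 0` nontangentially as `z → 0`. -/
theorem booleanStable_eta_properties (α ρ : ℝ)
    (hα0 : 0 < α) (hα1 : α < 1) (hρ0 : 0 ≤ ρ) (hρ1 : ρ ≤ 1) :
    (∀ z : ℂ, 0 < z.im →
      (-((Complex.exp (-(ρ : ℂ) * Real.pi * Complex.I) * z) ^ (α : ℂ))
          ∉ {w : ℂ | w.im = 0 ∧ 0 ≤ w.re}) ∧
      posArg z ≤ posArg (-((Complex.exp (-(ρ : ℂ) * Real.pi * Complex.I) * z) ^ (α : ℂ))) ∧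
      posArg (-((Complex.exp (-(ρ : ℂ) * Real.pi * Complex.I) * z) ^ (α : ℂ)))
          ≤ posArg z + Real.pi) ∧
    (∀ θ ∈ Set.Ioo 0 (Real.pi / 2),
      Tendsto (fun z : ℂ => -((Complex.exp (-(ρ : ℂ) * Real.pi * Complex.I) * z) ^ (α : ℂ)))
        (𝓝[stolzAngle θ] 0) (𝓝 0)) := by
  have hpi := Real.pi_pos
  constructor
  · intro z hz
    have hz0 : z ≠ 0 := by
      intro h; rw [h] at hz; simp at hz
    have ha1 : 0 < Complex.arg z := arg_pos_of_im_pos hz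
    have ha2 : Complex.arg z < Real.pi := arg_lt_pi_of_im_pos hz
    have hd1 : -Real.pi < Complex.arg z - ρ * Real.pi := by nlinarith
    have hd2 : Complex.arg z - ρ * Real.pi < Real.pi := by nlinarith
    have hpolar := eta_polar α ρ z hz0 ⟨hd1, hd2.le⟩
    set ψ := α * (Complex.arg z - ρ * Real.pi) with hψ
    have hψ1 : -Real.pi < ψ := by nlinarith
    have hψ2 : ψ < Real.pi := by nlinarith
    have habs : (0:ℝ) < ‖z‖ ^ α := Real.rpow_pos_of_pos (norm_pos_iff.mpr hz0) α
    have hposneg : posArg (-((Complex.exp (-(ρ : ℂ) * Real.pi * Complex.I) * z) ^ (α : ℂ)))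
        = ψ + Real.pi := by
      rw [hpolar]
      exact posArg_neg_rexp _ _ habs hψ1 hψ2
    have hposz : posArg z = Complex.arg z := by
      rw [posArg, if_neg (not_lt.2 (Complex.arg_nonneg_iff.2 hz.le))]
    refine ⟨?_, ?_, ?_⟩
    · intro hmem
      have h0 : Complex.arg (-((Complex.exp (-(ρ : ℂ) * Real.pi * Complex.I) * z) ^ (α : ℂ)))
          = 0 := Complex.arg_eq_zero_iff.2 ⟨hmem.2, hmem.1⟩
      rw [hpolar, arg_neg_rexp _ _ habs hψ1 hψ2] at h0
      split_ifs at h0 with h <;> linarith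
    · rw [hposneg, hposz, hψ]
      nlinarith [mul_nonneg (by linarith : (0:ℝ) ≤ 1 - α) (by linarith : (0:ℝ) ≤ Real.pi - Complex.arg z),
        mul_nonneg (mul_nonneg hα0.le (by linarith : (0:ℝ) ≤ 1 - ρ)) hpi.le]
    · rw [hposneg, hposz, hψ]
      nlinarith [mul_nonneg (mul_nonneg hα0.le hρ0) hpi.le,
        mul_nonneg (by linarith : (0:ℝ) ≤ 1 - α) ha1.le]
  · intro θ hθ
    rw [tendsto_zero_iff_norm_tendsto_zero]
    have hbound : ∀ z : ℂ,
        ‖-((Complex.exp (-(ρ : ℂ) * Real.pi * Complex.I) * z) ^ (α : ℂ))‖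
          ≤ ‖z‖ ^ α := by
      intro z
      rw [norm_neg]
      have := Complex.norm_cpow_le (Complex.exp (-(ρ : ℂ) * Real.pi * Complex.I) * z) (α : ℂ)
      simp only [Complex.ofReal_re, Complex.ofReal_im, mul_zero, Real.exp_zero, div_one] at this
      refine this.trans_eq ?_
      congr 1
      rw [norm_mul, Complex.norm_exp]
      simp
    refine squeeze_zero (fun z => norm_nonneg _) hbound ?_
    have hcont : ContinuousAt (fun t : ℝ => t ^ α) 0 :=
      Real.continuousAt_rpow_const 0 α (Or.inr hα0.le)
    have habs : Tendsto (fun z : ℂ => ‖z‖) (𝓝[stolzAngle θ] 0) (𝓝 0) := by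
      simpa using (continuous_norm.tendsto (0:ℂ)).mono_left nhdsWithin_le_nhds
    have := hcont.tendsto.comp habs
    simpa [Real.zero_rpow hα0.ne', Function.comp_def] using this
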